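/- Let G : ℝ → ℝ and c ∈ (0,1). Assume G is strictly concave on the closed interval [0, c], G(0) ≥ 0, and G is differentiable at c with derivative D. Then G(c)/c > D, and consequently there exists p ∈ (c, 1) such that p · G(c/p) < G(c). -/

import Mathlib

/-- Localized concavity condition: if the expected length function `G` is strictly concave
on `[0,c]`, nonnegative at `0`, and differentiable at `c` with derivative `D`, then
`G(c)/c > D`, and consequently some `p ∈ (c,1)` satisfies `p · G(c/p) < G(c)`. -/
theorem pt_local_concave_condition (G : ℝ → ℝ) (c : ℝ) (hc : c ∈ Set.Ioo (0 : ℝ) 1)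
    (hconc : StrictConcaveOn ℝ (Set.Icc 0 c) G)
    (hG0 : 0 ≤ G 0)
    (D : ℝ) (hderiv : HasDerivAt G D c) :
    G c / c > D ∧ ∃ p ∈ Set.Ioo c 1, p * G (c / p) < G c := by
  obtain ⟨hc0, hc1⟩ := hc
  have h1 : D < G c / c := by
    have hs := hconc.lt_slope_of_hasDerivAt (x := 0) (y := c)
      (Set.left_mem_Icc.2 hc0.le) (Set.right_mem_Icc.2 hc0.le) hc0 hderiv
    rw [slope_def_field, sub_zero] at hs
    have h2 : (G c - G 0) / c ≤ G c / c := (div_le_div_iff_of_pos_right hc0).mpr (by linarith)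
    linarith
  refine ⟨h1, ?_⟩
  -- derivative of p ↦ p * G (c / p) at 1 is G c - c * D > 0
  have hcp : HasDerivAt (fun p : ℝ => c / p) (-c) 1 := by
    have := (hasDerivAt_inv (one_ne_zero : (1:ℝ) ≠ 0)).const_mul c
    simpa [div_eq_mul_inv] using this
  have hGcp : HasDerivAt (fun p : ℝ => G (c / p)) (D * (-c)) 1 := by
    have h := hderiv
    have h' : HasDerivAt G D (c / 1) := by rwa [div_one]
    exact h'.comp 1 hcp
  have hf : HasDerivAt (fun p : ℝ => p * G (c / p)) (G c - c * D) 1 := by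
    have := (hasDerivAt_id (1:ℝ)).mul hGcp
    have h2 : (1:ℝ) * G (c / 1) + 1 * (D * -c) = G c - c * D := by
      rw [div_one]; ring
    have h3 : G c - c * D = G c + -(D * c) := by ring
    rw [h3]
    exact this.congr_deriv (by simp only [id, div_one]; ring)
  have hpos : 0 < G c - c * D := by
    have : c * D < G c := by
      have := (lt_div_iff₀ hc0).mp h1
      linarith
    linarith
  have htend := hasDerivAt_iff_tendsto_slope.mp hf
  have htend' : Filter.Tendsto (slope (fun p : ℝ => p * G (c / p)) 1) (nhdsWithin 1 (Set.Iio 1))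
      (nhds (G c - c * D)) :=
    htend.mono_left (nhdsWithin_mono 1 fun x hx => ne_of_lt hx)
  have hev1 : ∀ᶠ p in nhdsWithin 1 (Set.Iio 1),
      0 < slope (fun p : ℝ => p * G (c / p)) 1 p :=
    htend'.eventually (eventually_gt_nhds hpos)
  have hev2 : ∀ᶠ p in nhdsWithin 1 (Set.Iio 1), p ∈ Set.Ioo c 1 :=
    Filter.eventually_of_mem (Ioo_mem_nhdsLT_of_mem ⟨hc1, le_refl 1⟩) (fun x hx => hx)
  obtain ⟨p, hp1, hp2⟩ := (hev1.and hev2).exists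
  refine ⟨p, hp2, ?_⟩
  have hplt : p < 1 := hp2.2
  rw [slope_def_field] at hp1
  have hd : (p : ℝ) - 1 < 0 := by linarith
  have hlt : p * G (c / p) - 1 * G (c / 1) < 0 := by
    by_contra h
    push_neg at h
    have : (p * G (c / p) - 1 * G (c / 1)) / (p - 1) ≤ 0 :=
      div_nonpos_of_nonneg_of_nonpos h hd.le
    linarith
  have h1e : (1:ℝ) * G (c / 1) = G c := by rw [div_one, one_mul]
  linarith
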